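/- (Almost-highway traces are not sub-dynamics of one another) Let k > 1 and let i, j be integers with 0 < i < 2k, 0 < j < 2k−1 and i ≠ j. Then the 4-letter word (j+1)(j−1)(j)(0) (letters in ℤ/(2k+1)ℤ) occurs as a consecutive factor of the word t_{k,j}, but does not occur as a consecutive factor of the word t_{k,i}·t_{k,i}. -/

import Mathlib

/-- The word `⟨a.b.c.d⟩` over the alphabet `ℤ/(2k+1)ℤ`: the concatenation, for
`t = 0, 1, …, 2k−a−1`, of the 4-letter blocks `(a+t)(b+t)(c+t)(d+t)`.
It has length `4(2k−a)` and is empty when `a = 2k`. -/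
def cyc (k a b c d : ℕ) : List (ZMod (2 * k + 1)) :=
  (List.range (2 * k - a)).flatMap fun t =>
    [((a + t : ℕ) : ZMod (2 * k + 1)), ((b + t : ℕ) : ZMod (2 * k + 1)),
     ((c + t : ℕ) : ZMod (2 * k + 1)), ((d + t : ℕ) : ZMod (2 * k + 1))]

/-- The trace word
`t_{k,i} = ⟨0.0.0.0⟩·(2k)·⟨i.0.0.0⟩·(2k)·⟨(i+1).(i−1).i.0⟩·(2k)(2k)(2k−i)(2k)`
of the `L^{2k}R` ant along one almost-highway segment (length `24k − 8i + 2`). -/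
def tword (k i : ℕ) : List (ZMod (2 * k + 1)) :=
  cyc k 0 0 0 0 ++ [((2 * k : ℕ) : ZMod (2 * k + 1))] ++ cyc k i 0 0 0
    ++ [((2 * k : ℕ) : ZMod (2 * k + 1))] ++ cyc k (i + 1) (i - 1) i 0
    ++ [((2 * k : ℕ) : ZMod (2 * k + 1)), ((2 * k : ℕ) : ZMod (2 * k + 1)),
        ((2 * k - i : ℕ) : ZMod (2 * k + 1)), ((2 * k : ℕ) : ZMod (2 * k + 1))]

namespace AH

lemma flat4_length {α : Type*} (p q r s : ℕ → α) (m : ℕ) :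
    ((List.range m).flatMap fun t => [p t, q t, r t, s t]).length = 4 * m := by
  induction m with
  | zero => simp
  | succ m ih =>
      rw [List.range_succ, List.flatMap_append, List.length_append, ih]
      simp [Nat.mul_succ]

lemma flat4_get {α : Type*} (p q r s : ℕ → α) (m n : ℕ) (h : n < 4 * m) :
    ((List.range m).flatMap fun t => [p t, q t, r t, s t])[n]? =
      some (if n % 4 = 0 then p (n / 4) else if n % 4 = 1 then q (n / 4)
            else if n % 4 = 2 then r (n / 4) else s (n / 4)) := by
  induction m with
  | zero => omega
  | succ m ih =>
      rw [List.range_succ, List.flatMap_append]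
      rcases Nat.lt_or_ge n (4 * m) with h' | h'
      · rw [List.getElem?_append_left (by rw [flat4_length]; exact h'), ih h']
      · rw [List.getElem?_append_right (by rw [flat4_length]; exact h'), flat4_length]
        simp only [List.flatMap_cons, List.flatMap_nil, List.append_nil]
        rcases (show n - 4*m = 0 ∨ n - 4*m = 1 ∨ n - 4*m = 2 ∨ n - 4*m = 3 by omega) with
          h0 | h0 | h0 | h0 <;>
          rw [h0] <;>
          simp [show n / 4 = m by omega, show n % 4 = n - 4*m by omega, h0]

lemma cyc_length (k a b c d : ℕ) : (cyc k a b c d).length = 4 * (2 * k - a) :=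
  flat4_length _ _ _ _ _

lemma cyc_get' (k a b c d n : ℕ) :
    (cyc k a b c d)[n]? =
      if n < 4 * (2 * k - a) then
        some (if n % 4 = 0 then ((a + n / 4 : ℕ) : ZMod (2 * k + 1))
          else if n % 4 = 1 then ((b + n / 4 : ℕ) : ZMod (2 * k + 1))
          else if n % 4 = 2 then ((c + n / 4 : ℕ) : ZMod (2 * k + 1))
          else ((d + n / 4 : ℕ) : ZMod (2 * k + 1)))
      else none := by
  by_cases h : n < 4 * (2 * k - a)
  · rw [if_pos h]
    exact flat4_get _ _ _ _ (2 * k - a) n (by omega)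
  · rw [if_neg h]
    exact List.getElem?_eq_none (by rw [cyc_length]; omega)

lemma getElem?_append' {α : Type*} (l₁ l₂ : List α) (n : ℕ) :
    (l₁ ++ l₂)[n]? = if n < l₁.length then l₁[n]? else l₂[n - l₁.length]? := by
  split_ifs with h
  · exact List.getElem?_append_left h
  · exact List.getElem?_append_right (by omega)

lemma getElem?_cons' {α : Type*} (a : α) (l : List α) (n : ℕ) :
    (a :: l)[n]? = if n = 0 then some a else l[n - 1]? := by
  cases n with
  | zero => simp
  | succ n => simp

/-- The letter of `tword k i` at position `m`, as a natural number `≤ 2k`. -/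
def Fv (k i m : ℕ) : ℕ :=
  if m < 8 * k then m / 4
  else if m = 8 * k then 2 * k
  else if m < 8 * k + 1 + 4 * (2 * k - i) then
    (if (m - (8 * k + 1)) % 4 = 0 then i + (m - (8 * k + 1)) / 4 else (m - (8 * k + 1)) / 4)
  else if m = 8 * k + 1 + 4 * (2 * k - i) then 2 * k
  else if m < 8 * k + 2 + 4 * (2 * k - i) + 4 * (2 * k - i - 1) then
    (if (m - (8 * k + 2 + 4 * (2 * k - i))) % 4 = 0 then
        i + 1 + (m - (8 * k + 2 + 4 * (2 * k - i))) / 4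
     else if (m - (8 * k + 2 + 4 * (2 * k - i))) % 4 = 1 then
        i - 1 + (m - (8 * k + 2 + 4 * (2 * k - i))) / 4
     else if (m - (8 * k + 2 + 4 * (2 * k - i))) % 4 = 2 then
        i + (m - (8 * k + 2 + 4 * (2 * k - i))) / 4
     else (m - (8 * k + 2 + 4 * (2 * k - i))) / 4)
  else if m = 8 * k + 2 + 4 * (2 * k - i) + 4 * (2 * k - i - 1) + 2 then 2 * k - i
  else 2 * k

lemma FvA (k i m : ℕ) (h : m < 8 * k) : Fv k i m = m / 4 := by
  unfold Fv; split_ifs <;> omega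

lemma FvS1 (k i : ℕ) (hk : 1 ≤ k) : Fv k i (8 * k) = 2 * k := by
  unfold Fv; split_ifs <;> omega

lemma FvB (k i q : ℕ) (h : q < 4 * (2 * k - i)) :
    Fv k i (8 * k + 1 + q) = if q % 4 = 0 then i + q / 4 else q / 4 := by
  unfold Fv; split_ifs <;> omega

lemma FvS2 (k i : ℕ) : Fv k i (8 * k + 1 + 4 * (2 * k - i)) = 2 * k := by
  unfold Fv; split_ifs <;> omega

lemma FvC (k i q : ℕ) (h : q < 4 * (2 * k - i - 1)) :
    Fv k i (8 * k + 2 + 4 * (2 * k - i) + q) =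
      if q % 4 = 0 then i + 1 + q / 4 else if q % 4 = 1 then i - 1 + q / 4
      else if q % 4 = 2 then i + q / 4 else q / 4 := by
  unfold Fv; split_ifs <;> omega

lemma FvT (k i q : ℕ) (h : q < 4) :
    Fv k i (8 * k + 2 + 4 * (2 * k - i) + 4 * (2 * k - i - 1) + q) =
      if q = 2 then 2 * k - i else 2 * k := by
  unfold Fv; split_ifs <;> omega

lemma Fv_lt (k i m : ℕ) (hk : 1 ≤ k) : Fv k i m < 2 * k + 1 := by
  unfold Fv; split_ifs <;> omega

lemma tword_length (k i : ℕ) (hi : i < 2 * k) : (tword k i).length = 24 * k - 8 * i + 2 := by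
  simp only [tword, List.length_append, cyc_length, List.length_singleton, List.length_cons,
    List.length_nil]
  omega

set_option maxHeartbeats 1000000 in
lemma tword_get (k i m : ℕ) (hk : 1 ≤ k) (hi : i < 2 * k) (hm : m < 24 * k - 8 * i + 2) :
    (tword k i)[m]? = some ((Fv k i m : ℕ) : ZMod (2 * k + 1)) := by
  unfold tword
  simp only [List.append_assoc]
  simp only [getElem?_append', cyc_length, List.length_singleton, List.length_cons,
    List.length_nil]
  rcases (show m < 8 * k ∨ m = 8 * k ∨ (8 * k + 1 ≤ m ∧ m < 8 * k + 1 + 4 * (2 * k - i)) ∨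
      m = 8 * k + 1 + 4 * (2 * k - i) ∨
      (8 * k + 2 + 4 * (2 * k - i) ≤ m ∧
        m < 8 * k + 2 + 4 * (2 * k - i) + 4 * (2 * k - i - 1)) ∨
      8 * k + 2 + 4 * (2 * k - i) + 4 * (2 * k - i - 1) ≤ m by omega) with
    hr | hr | hr | hr | hr | hr
  · split_ifs
    all_goals try exact (by omega : False).elim
    all_goals simp only [cyc_get', getElem?_cons', List.getElem?_nil]
    all_goals try split_ifs
    all_goals try exact (by omega : False).elim
    all_goals refine congrArg (fun x : ℕ =>
      (some ((x : ZMod (2 * k + 1))) : Option (ZMod (2 * k + 1)))) ?_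
    all_goals rw [FvA k i m hr]
    all_goals omega
  · obtain rfl : m = 8 * k := hr
    split_ifs
    all_goals try exact (by omega : False).elim
    all_goals simp only [cyc_get', getElem?_cons', List.getElem?_nil]
    all_goals try split_ifs
    all_goals try exact (by omega : False).elim
    all_goals refine congrArg (fun x : ℕ =>
      (some ((x : ZMod (2 * k + 1))) : Option (ZMod (2 * k + 1)))) ?_
    all_goals rw [FvS1 k i hk]
  · obtain ⟨q, hq, rfl⟩ : ∃ q, q < 4 * (2 * k - i) ∧ m = 8 * k + 1 + q :=
      ⟨m - (8 * k + 1), by omega, by omega⟩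
    split_ifs
    all_goals try exact (by omega : False).elim
    all_goals simp only [cyc_get', getElem?_cons', List.getElem?_nil]
    all_goals try split_ifs
    all_goals try exact (by omega : False).elim
    all_goals refine congrArg (fun x : ℕ =>
      (some ((x : ZMod (2 * k + 1))) : Option (ZMod (2 * k + 1)))) ?_
    all_goals rw [FvB k i q hq]
    all_goals split_ifs <;> omega
  · obtain rfl : m = 8 * k + 1 + 4 * (2 * k - i) := hr
    split_ifs
    all_goals try exact (by omega : False).elim
    all_goals simp only [cyc_get', getElem?_cons', List.getElem?_nil]
    all_goals try split_ifs
    all_goals try exact (by omega : False).elim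
    all_goals refine congrArg (fun x : ℕ =>
      (some ((x : ZMod (2 * k + 1))) : Option (ZMod (2 * k + 1)))) ?_
    all_goals rw [FvS2 k i]
  · obtain ⟨q, hq, rfl⟩ : ∃ q, q < 4 * (2 * k - i - 1) ∧ m = 8 * k + 2 + 4 * (2 * k - i) + q :=
      ⟨m - (8 * k + 2 + 4 * (2 * k - i)), by omega, by omega⟩
    split_ifs
    all_goals try exact (by omega : False).elim
    all_goals simp only [cyc_get', getElem?_cons', List.getElem?_nil]
    all_goals try split_ifs
    all_goals try exact (by omega : False).elim
    all_goals refine congrArg (fun x : ℕ =>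
      (some ((x : ZMod (2 * k + 1))) : Option (ZMod (2 * k + 1)))) ?_
    all_goals rw [FvC k i q hq]
    all_goals split_ifs <;> omega
  · obtain ⟨q, hq, rfl⟩ :
        ∃ q, q < 4 ∧ m = 8 * k + 2 + 4 * (2 * k - i) + 4 * (2 * k - i - 1) + q :=
      ⟨m - (8 * k + 2 + 4 * (2 * k - i) + 4 * (2 * k - i - 1)), by omega, by omega⟩
    split_ifs
    all_goals try exact (by omega : False).elim
    all_goals simp only [cyc_get', getElem?_cons', List.getElem?_nil]
    all_goals try split_ifs
    all_goals try exact (by omega : False).elim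
    all_goals refine congrArg (fun x : ℕ =>
      (some ((x : ZMod (2 * k + 1))) : Option (ZMod (2 * k + 1)))) ?_
    all_goals rw [FvT k i q hq]
    all_goals split_ifs <;> omega

lemma zcast_inj {k a b : ℕ} (ha : a < 2 * k + 1) (hb : b < 2 * k + 1)
    (h : (a : ZMod (2 * k + 1)) = (b : ZMod (2 * k + 1))) : a = b := by
  have h2 := congrArg ZMod.val h
  rwa [ZMod.val_cast_of_lt ha, ZMod.val_cast_of_lt hb] at h2

lemma Fv_zero (k i m : ℕ) (hk : 1 ≤ k) (hi0 : 0 < i) (hi : i < 2 * k)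
    (hm : m < 24 * k - 8 * i + 2) (h : Fv k i m = 0) :
    m < 4 ∨ m = 8 * k + 2 ∨ m = 8 * k + 3 ∨ m = 8 * k + 4 ∨
      (i = 1 ∧ m = 16 * k - 4 * i + 3) ∨ m = 16 * k - 4 * i + 5 := by
  rcases (show m < 8 * k ∨ m = 8 * k ∨ (8 * k + 1 ≤ m ∧ m < 8 * k + 1 + 4 * (2 * k - i)) ∨
      m = 8 * k + 1 + 4 * (2 * k - i) ∨
      (8 * k + 2 + 4 * (2 * k - i) ≤ m ∧
        m < 8 * k + 2 + 4 * (2 * k - i) + 4 * (2 * k - i - 1)) ∨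
      8 * k + 2 + 4 * (2 * k - i) + 4 * (2 * k - i - 1) ≤ m by omega) with
    hr | hr | hr | hr | hr | hr
  · rw [FvA k i m hr] at h; omega
  · subst hr; rw [FvS1 k i hk] at h; omega
  · obtain ⟨q, hq, rfl⟩ : ∃ q, q < 4 * (2 * k - i) ∧ m = 8 * k + 1 + q :=
      ⟨m - (8 * k + 1), by omega, by omega⟩
    rw [FvB k i q hq] at h; split_ifs at h <;> omega
  · subst hr; rw [FvS2 k i] at h; omega
  · obtain ⟨q, hq, rfl⟩ : ∃ q, q < 4 * (2 * k - i - 1) ∧ m = 8 * k + 2 + 4 * (2 * k - i) + q :=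
      ⟨m - (8 * k + 2 + 4 * (2 * k - i)), by omega, by omega⟩
    rw [FvC k i q hq] at h; split_ifs at h <;> omega
  · obtain ⟨q, hq, rfl⟩ :
        ∃ q, q < 4 ∧ m = 8 * k + 2 + 4 * (2 * k - i) + 4 * (2 * k - i - 1) + q :=
      ⟨m - (8 * k + 2 + 4 * (2 * k - i) + 4 * (2 * k - i - 1)), by omega, by omega⟩
    rw [FvT k i q hq] at h; split_ifs at h <;> omega

lemma no_occ_core (k i j n : ℕ) (hk : 1 < k) (hi0 : 0 < i) (hi : i < 2 * k)
    (hj0 : 0 < j) (hj : j < 2 * k - 1) (hij : i ≠ j)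
    (hn : n + 3 < 24 * k - 8 * i + 2)
    (E0 : Fv k i n = j + 1) (E1 : Fv k i (n + 1) = j - 1)
    (E2 : Fv k i (n + 2) = j) (E3 : Fv k i (n + 3) = 0) : False := by
  have hkk : 1 ≤ k := by omega
  rcases Fv_zero k i (n + 3) hkk hi0 hi hn E3 with h | h | h | h | ⟨hi1, h⟩ | h
  · rw [FvA k i n (by omega)] at E0; omega
  · rw [show n + 1 = 8 * k by omega, FvS1 k i hkk] at E1; omega
  · rw [show n = 8 * k by omega, FvS1 k i hkk] at E0; omega
  · rw [show n + 2 = 8 * k + 1 + 2 by omega, FvB k i 2 (by omega)] at E2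
    split_ifs at E2 <;> omega
  · rw [show n + 1 = 8 * k + 1 + 4 * (2 * k - i) by omega, FvS2 k i] at E1; omega
  · rcases Nat.lt_or_ge i (2 * k - 1) with hi2 | hi2
    · rw [show n = 8 * k + 2 + 4 * (2 * k - i) + 0 by omega, FvC k i 0 (by omega)] at E0
      split_ifs at E0 <;> omega
    · rw [show n = 8 * k + 2 + 4 * (2 * k - i) + 4 * (2 * k - i - 1) + 0 by omega,
          FvT k i 0 (by omega)] at E0
      split_ifs at E0 <;> omega

lemma factor4_iff {α : Type*} (u : List α) (a b c d : α) :
    [a, b, c, d] <:+: u ↔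
      ∃ n, u[n]? = some a ∧ u[n + 1]? = some b ∧ u[n + 2]? = some c ∧ u[n + 3]? = some d := by
  constructor
  · rintro ⟨s, t, rfl⟩
    simp only [List.append_assoc]
    refine ⟨s.length, ?_, ?_, ?_, ?_⟩
    · rw [List.getElem?_append_right (le_refl s.length), Nat.sub_self,
          List.getElem?_append_left (by simp)]; rfl
    · rw [List.getElem?_append_right (Nat.le_add_right s.length 1), Nat.add_sub_cancel_left,
          List.getElem?_append_left (by simp)]; rfl
    · rw [List.getElem?_append_right (Nat.le_add_right s.length 2), Nat.add_sub_cancel_left,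
          List.getElem?_append_left (by simp)]; rfl
    · rw [List.getElem?_append_right (Nat.le_add_right s.length 3), Nat.add_sub_cancel_left,
          List.getElem?_append_left (by simp)]; rfl
  · rintro ⟨n, h0, h1, h2, h3⟩
    have step : ∀ (x : α) (m : ℕ), u[m]? = some x → u.drop m = x :: u.drop (m + 1) := by
      intro x m h
      obtain ⟨hlt, he⟩ := List.getElem?_eq_some_iff.1 h
      rw [List.drop_eq_getElem_cons hlt, he]
    have d0 := step a n h0
    have d1 := step b (n + 1) h1
    have d2 := step c (n + 2) h2
    have d3 := step d (n + 3) h3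
    rw [show n + 1 + 1 = n + 2 by omega] at d1
    rw [show n + 2 + 1 = n + 3 by omega] at d2
    rw [show n + 3 + 1 = n + 4 by omega] at d3
    rw [d3] at d2; rw [d2] at d1; rw [d1] at d0
    refine ⟨u.take n, u.drop (n + 4), ?_⟩
    conv_rhs => rw [← List.take_append_drop n u, d0]
    simp

end AH

open AH in
/-- almost-highway traces are not sub-dynamics of one another.
For `k > 1`, `0 < i < 2k`, `0 < j < 2k−1` and `i ≠ j`, the 4-letter word
`(j+1)(j−1)(j)(0)` occurs as a consecutive factor of `t_{k,j}` but not of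
`t_{k,i}·t_{k,i}`. -/
theorem tword_factor_distinct (k i j : ℕ) (hk : 1 < k)
    (hi0 : 0 < i) (hi : i < 2 * k) (hj0 : 0 < j) (hj : j < 2 * k - 1) (hij : i ≠ j) :
    ([((j + 1 : ℕ) : ZMod (2 * k + 1)), ((j - 1 : ℕ) : ZMod (2 * k + 1)),
        ((j : ℕ) : ZMod (2 * k + 1)), 0] <:+: tword k j) ∧
    ¬ ([((j + 1 : ℕ) : ZMod (2 * k + 1)), ((j - 1 : ℕ) : ZMod (2 * k + 1)),
        ((j : ℕ) : ZMod (2 * k + 1)), 0] <:+: (tword k i ++ tword k i)) := by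
  have hkk : 1 ≤ k := by omega
  constructor
  · rw [factor4_iff]
    refine ⟨16 * k - 4 * j + 2, ?_, ?_, ?_, ?_⟩
    · rw [show 16 * k - 4 * j + 2 = 8 * k + 2 + 4 * (2 * k - j) + 0 by omega,
          tword_get k j (8 * k + 2 + 4 * (2 * k - j) + 0) hkk (by omega) (by omega),
          FvC k j 0 (by omega)]
      norm_num
    · rw [show 16 * k - 4 * j + 2 + 1 = 8 * k + 2 + 4 * (2 * k - j) + 1 by omega,
          tword_get k j (8 * k + 2 + 4 * (2 * k - j) + 1) hkk (by omega) (by omega),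
          FvC k j 1 (by omega)]
      norm_num
    · rw [show 16 * k - 4 * j + 2 + 2 = 8 * k + 2 + 4 * (2 * k - j) + 2 by omega,
          tword_get k j (8 * k + 2 + 4 * (2 * k - j) + 2) hkk (by omega) (by omega),
          FvC k j 2 (by omega)]
      norm_num
    · rw [show 16 * k - 4 * j + 2 + 3 = 8 * k + 2 + 4 * (2 * k - j) + 3 by omega,
          tword_get k j (8 * k + 2 + 4 * (2 * k - j) + 3) hkk (by omega) (by omega),
          FvC k j 3 (by omega)]
      norm_num
  · rw [factor4_iff]
    rintro ⟨n, h0, h1, h2, h3⟩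
    have hL := tword_length k i hi
    have hn3 : n + 3 < (24 * k - 8 * i + 2) + (24 * k - 8 * i + 2) := by
      obtain ⟨hlt, -⟩ := List.getElem?_eq_some_iff.1 h3
      rwa [List.length_append, hL] at hlt
    have read1 : ∀ p, p < 24 * k - 8 * i + 2 →
        (tword k i ++ tword k i)[p]? = some ((Fv k i p : ℕ) : ZMod (2 * k + 1)) := by
      intro p hp
      rw [List.getElem?_append_left (by rw [hL]; exact hp), tword_get k i p hkk hi hp]
    have read2 : ∀ p, 24 * k - 8 * i + 2 ≤ p → p < (24 * k - 8 * i + 2) + (24 * k - 8 * i + 2) →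
        (tword k i ++ tword k i)[p]? =
          some ((Fv k i (p - (24 * k - 8 * i + 2)) : ℕ) : ZMod (2 * k + 1)) := by
      intro p hp1 hp2
      rw [List.getElem?_append_right (by rw [hL]; exact hp1), hL,
          tword_get k i _ hkk hi (by omega)]
    have hFlt : ∀ w : ℕ, Fv k i w < 2 * k + 1 := fun w => Fv_lt k i w hkk
    have ext : ∀ w v : ℕ, v < 2 * k + 1 →
        (some ((Fv k i w : ℕ) : ZMod (2 * k + 1)) : Option (ZMod (2 * k + 1))) =
          some ((v : ℕ) : ZMod (2 * k + 1)) → Fv k i w = v := by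
      intro w v hv h
      exact zcast_inj (hFlt w) hv (Option.some.inj h)
    by_cases hc : n + 3 < 24 * k - 8 * i + 2
    · have E0 := ext n (j + 1) (by omega) ((read1 n (by omega)).symm.trans h0)
      have E1 := ext (n + 1) (j - 1) (by omega) ((read1 (n + 1) (by omega)).symm.trans h1)
      have E2 := ext (n + 2) j (by omega) ((read1 (n + 2) (by omega)).symm.trans h2)
      have E3 := ext (n + 3) 0 (by omega)
        (by rw [Nat.cast_zero]; exact (read1 (n + 3) (by omega)).symm.trans h3)
      exact no_occ_core k i j n hk hi0 hi hj0 hj hij hc E0 E1 E2 E3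
    by_cases hcc : 24 * k - 8 * i + 2 ≤ n
    · have E0 := ext (n - (24 * k - 8 * i + 2)) (j + 1) (by omega)
        ((read2 n hcc (by omega)).symm.trans h0)
      have E1 := ext (n + 1 - (24 * k - 8 * i + 2)) (j - 1) (by omega)
        ((read2 (n + 1) (by omega) (by omega)).symm.trans h1)
      have E2 := ext (n + 2 - (24 * k - 8 * i + 2)) j (by omega)
        ((read2 (n + 2) (by omega) (by omega)).symm.trans h2)
      have E3 := ext (n + 3 - (24 * k - 8 * i + 2)) 0 (by omega)
        (by rw [Nat.cast_zero]; exact (read2 (n + 3) (by omega) (by omega)).symm.trans h3)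
      rw [show n + 1 - (24 * k - 8 * i + 2) = n - (24 * k - 8 * i + 2) + 1 by omega] at E1
      rw [show n + 2 - (24 * k - 8 * i + 2) = n - (24 * k - 8 * i + 2) + 2 by omega] at E2
      rw [show n + 3 - (24 * k - 8 * i + 2) = n - (24 * k - 8 * i + 2) + 3 by omega] at E3
      exact no_occ_core k i j (n - (24 * k - 8 * i + 2)) hk hi0 hi hj0 hj hij
        (by omega) E0 E1 E2 E3
    -- straddling occurrences: the occurrence starts in the last three letters of the
    -- first copy, all of which are `2k` or `2k - i`
    rcases (show n = 24 * k - 8 * i - 1 ∨ n = 24 * k - 8 * i ∨ n = 24 * k - 8 * i + 1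
        by omega) with hn | hn | hn
    · have E0 := ext n (j + 1) (by omega) ((read1 n (by omega)).symm.trans h0)
      rw [hn, show 24 * k - 8 * i - 1 =
          8 * k + 2 + 4 * (2 * k - i) + 4 * (2 * k - i - 1) + 1 by omega,
          FvT k i 1 (by omega)] at E0
      split_ifs at E0 <;> omega
    · have E1 := ext (n + 1) (j - 1) (by omega) ((read1 (n + 1) (by omega)).symm.trans h1)
      rw [hn, show 24 * k - 8 * i + 1 =
          8 * k + 2 + 4 * (2 * k - i) + 4 * (2 * k - i - 1) + 3 by omega,
          FvT k i 3 (by omega)] at E1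
      split_ifs at E1 <;> omega
    · have E0 := ext n (j + 1) (by omega) ((read1 n (by omega)).symm.trans h0)
      rw [hn, show 24 * k - 8 * i + 1 =
          8 * k + 2 + 4 * (2 * k - i) + 4 * (2 * k - i - 1) + 3 by omega,
          FvT k i 3 (by omega)] at E0
      split_ifs at E0 <;> omega
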